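/- For every positive integer i, the polynomial identity ∑_{k=1}^{i+2} (b(i,2,k)/k!)·t^k = (1/(i+2)!)·t(t+1)(t+2)⋯(t+i)·(t + i/2) holds in ℚ[t], where b(i,2,k) = ∑_{P(k,i+2)} 1/(l₁⋯l_k) − (1/2)∑_{P(k,i+1)} 1/(l₁⋯l_k). -/

import Mathlib

open Finset Polynomial

/-- The set of `k`-tuples of positive integers summing to `n`. -/
def P (k n : ℕ) : Finset (Fin k → ℕ) :=
  (Finset.Nat.antidiagonalTuple k n).filter fun l => ∀ i, 0 < l i

/-- `∑_{(l₁,…,l_k)∈P(k,n)} 1/(l₁⋯l_k)`. -/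
def S (k n : ℕ) : ℚ := ∑ l ∈ P k n, (∏ i, (l i : ℚ))⁻¹

/-- `e_l(1,2,…,m)` : the l-th elementary symmetric polynomial evaluated at 1,…,m. -/
def esym (m l : ℕ) : ℚ := (((Finset.range m).val.map fun i => ((i : ℚ) + 1)).esymm l)

noncomputable def L : PowerSeries ℚ := PowerSeries.mk fun n => (n : ℚ)⁻¹

lemma coeff_L (n : ℕ) : PowerSeries.coeff n L = (n : ℚ)⁻¹ := PowerSeries.coeff_mk _ _

lemma mem_P {k n : ℕ} {l : Fin k → ℕ} : l ∈ P k n ↔ (∑ i, l i = n ∧ ∀ i, 0 < l i) := by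
  simp [P, Finset.mem_filter, Finset.Nat.mem_antidiagonalTuple]

lemma S_succ (k n : ℕ) :
    ∑ p ∈ Finset.HasAntidiagonal.antidiagonal n, (p.1 : ℚ)⁻¹ * S k p.2 = S (k+1) n := by
  simp only [S, Finset.mul_sum]
  rw [Finset.sum_sigma']
  rw [← Finset.sum_filter_of_ne (p := fun x : (Σ _p : ℕ × ℕ, Fin k → ℕ) => x.1.1 ≠ 0)
    (fun x _hx hf => by
      intro h0
      apply hf
      simp [h0])]
  refine Finset.sum_bij' (fun x _ => Fin.cons x.1.1 x.2)
    (fun l _ => ⟨(l 0, ∑ i, Fin.tail l i), Fin.tail l⟩) ?_ ?_ ?_ ?_ ?_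
  · intro x hx
    simp only [Finset.mem_filter, Finset.mem_sigma, Finset.HasAntidiagonal.mem_antidiagonal] at hx
    obtain ⟨⟨had, hP⟩, hne⟩ := hx
    rw [mem_P] at hP ⊢
    constructor
    · rw [Fin.sum_cons, hP.1, had]
    · intro j
      refine Fin.cases ?_ ?_ j
      · simpa using Nat.pos_of_ne_zero hne
      · intro j'; simpa using hP.2 j'
  · intro l hl
    rw [mem_P] at hl
    simp only [Finset.mem_filter, Finset.mem_sigma, Finset.HasAntidiagonal.mem_antidiagonal]
    refine ⟨⟨?_, ?_⟩, ?_⟩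
    · rw [← hl.1, Fin.sum_univ_succ]; rfl
    · rw [mem_P]
      exact ⟨rfl, fun j => hl.2 j.succ⟩
    · exact (hl.2 0).ne'
  · rintro ⟨⟨a, b⟩, t⟩ hx
    simp only [Finset.mem_filter, Finset.mem_sigma, Finset.HasAntidiagonal.mem_antidiagonal] at hx
    have hb : ∑ i, t i = b := (mem_P.mp hx.1.2).1
    simp [Fin.tail_cons, Fin.cons_zero, hb]
  · intro l _
    exact Fin.cons_self_tail l
  · rintro ⟨⟨a, b⟩, t⟩ _
    show (a : ℚ)⁻¹ * (∏ i, (t i : ℚ))⁻¹ = (∏ i, ((Fin.cons a t : Fin (k+1) → ℕ) i : ℚ))⁻¹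
    rw [← Nat.cast_prod, ← Nat.cast_prod, Fin.prod_cons, Nat.cast_mul, mul_inv]

lemma S_eq (k n : ℕ) : S k n = PowerSeries.coeff n (L ^ k) := by
  induction k generalizing n with
  | zero =>
    rw [pow_zero, PowerSeries.coeff_one]
    cases n with
    | zero =>
      simp [S, P, Finset.Nat.antidiagonalTuple_zero_zero, Finset.filter_singleton]
    | succ m =>
      simp [S, P, Finset.Nat.antidiagonalTuple_zero_succ]
  | succ k ih =>
    rw [pow_succ', PowerSeries.coeff_mul]
    simp_rw [coeff_L, ← ih]
    exact (S_succ k n).symm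

lemma S_zero_pos {n : ℕ} (hn : 1 ≤ n) : S 0 n = 0 := by
  obtain ⟨m, rfl⟩ := Nat.exists_eq_add_of_le hn
  simp [S, P, Finset.Nat.antidiagonalTuple_zero_succ, Nat.add_comm]

lemma S_of_lt {k n : ℕ} (h : n < k) : S k n = 0 := by
  have hP : P k n = ∅ := by
    refine Finset.eq_empty_of_forall_notMem fun l hl => ?_
    rw [mem_P] at hl
    have hk : k ≤ ∑ i, l i := by
      calc k = ∑ _i : Fin k, 1 := by simp
        _ ≤ ∑ i, l i := Finset.sum_le_sum fun i _ => hl.2 i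
    omega
  simp [S, hP]

lemma hDL : (1 - PowerSeries.X) * (PowerSeries.derivative ℚ L) = 1 := by
  ext m
  rw [sub_mul, one_mul, map_sub]
  have h1 : ∀ j : ℕ, PowerSeries.coeff j (PowerSeries.derivative ℚ L) = 1 := by
    intro j
    rw [PowerSeries.coeff_derivative, coeff_L]
    push_cast
    rw [inv_mul_cancel₀ (by positivity)]
  cases m with
  | zero =>
    simp [h1]
  | succ j =>
    rw [PowerSeries.coeff_succ_X_mul, h1, h1, PowerSeries.coeff_one]
    simp

lemma recur (k n : ℕ) :
    ((n : ℚ) + 1) * S (k+1) (n+1) = (n : ℚ) * S (k+1) n + ((k : ℚ) + 1) * S k n := by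
  have h1 : (1 - PowerSeries.X) * (PowerSeries.derivative ℚ (L ^ (k+1)))
      = (k+1 : ℕ) • L ^ k := by
    rw [Derivation.leibniz_pow]
    simp only [Nat.succ_sub_one, smul_eq_mul]
    rw [mul_smul_comm, ← mul_assoc, mul_comm (1 - PowerSeries.X) (L ^ k), mul_assoc, hDL,
      mul_one]
  have h2 := congrArg (PowerSeries.coeff n) h1
  rw [sub_mul, one_mul, map_sub, map_nsmul, PowerSeries.coeff_derivative, ← S_eq, ← S_eq] at h2
  cases n with
  | zero =>
    have h3 : PowerSeries.coeff 0 (PowerSeries.X * (PowerSeries.derivative ℚ (L ^ (k+1)))) = 0 := by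
      simp [PowerSeries.coeff_zero_eq_constantCoeff]
    rw [h3, sub_zero] at h2
    simp only [nsmul_eq_mul] at h2
    push_cast at h2 ⊢
    linarith
  | succ j =>
    rw [PowerSeries.coeff_succ_X_mul, PowerSeries.coeff_derivative, ← S_eq] at h2
    simp only [nsmul_eq_mul] at h2
    push_cast at h2 ⊢
    linarith

lemma coeff_sum' (c : ℕ → ℚ) (N m : ℕ) :
    (∑ k ∈ Finset.Icc 1 N, C (c k) * X ^ k).coeff m = if m ∈ Finset.Icc 1 N then c m else 0 := by
  rw [Polynomial.finset_sum_coeff]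
  simp_rw [Polynomial.coeff_C_mul, Polynomial.coeff_X_pow, mul_ite, mul_one, mul_zero]
  simp

lemma coeff_main (n m : ℕ) (hn : 1 ≤ n) :
    (∑ k ∈ Finset.Icc 1 n, C ((n.factorial : ℚ) * S k n / k.factorial) * X ^ k).coeff m
      = (n.factorial : ℚ) * S m n / m.factorial := by
  rw [coeff_sum']
  split_ifs with h
  · rfl
  · rw [Finset.mem_Icc] at h
    push_neg at h
    rcases Nat.lt_or_ge m 1 with hm | hm
    · interval_cases m
      rw [S_zero_pos hn]
      simp
    · rw [S_of_lt (h hm)]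
      simp

lemma key (n : ℕ) (hn : 1 ≤ n) :
    ∏ j ∈ Finset.range n, (X + C (j : ℚ))
      = ∑ k ∈ Finset.Icc 1 n, C ((n.factorial : ℚ) * S k n / k.factorial) * X ^ k := by
  induction n, hn using Nat.le_induction with
  | base =>
    have hS : S 1 1 = 1 := by rw [S_eq, pow_one, coeff_L]; norm_num
    simp [hS]
  | succ n hn ih =>
    rw [Finset.prod_range_succ, ih]
    apply Polynomial.ext
    intro m
    rw [mul_add, Polynomial.coeff_add, Polynomial.coeff_mul_C, coeff_main n m hn,
      coeff_main (n+1) m (by omega)]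
    cases m with
    | zero =>
      rw [S_zero_pos hn, S_zero_pos (by omega : 1 ≤ n + 1)]
      simp
    | succ m =>
      rw [Polynomial.coeff_mul_X, coeff_main n m hn]
      have hrec := recur m n
      have hf1 : ((n+1).factorial : ℚ) = ((n : ℚ) + 1) * (n.factorial : ℚ) := by
        rw [Nat.factorial_succ]; push_cast; ring
      have hf2 : ((m+1).factorial : ℚ) = ((m : ℚ) + 1) * (m.factorial : ℚ) := by
        rw [Nat.factorial_succ]; push_cast; ring
      have hm0 : (m.factorial : ℚ) ≠ 0 := Nat.cast_ne_zero.mpr m.factorial_ne_zero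
      have hm1 : ((m : ℚ) + 1) ≠ 0 := by positivity
      rw [hf1, hf2]
      have hS : S (m+1) (n+1) = ((n : ℚ) * S (m+1) n + ((m : ℚ) + 1) * S m n) / ((n : ℚ) + 1) := by
        rw [eq_div_iff (by positivity)]
        linarith [hrec]
      rw [hS]
      have hn1 : ((n : ℚ) + 1) ≠ 0 := by positivity
      field_simp
      ring

theorem stmt6 (i : ℕ) (hi : 0 < i) :
    ∑ k ∈ Finset.Icc 1 (i + 2),
        Polynomial.C ((S k (i + 2) - S k (i + 1) / 2) / k.factorial) * X ^ k
      = Polynomial.C (1 / ((i + 2).factorial : ℚ)) *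
        (∏ j ∈ Finset.range (i + 1), (X + Polynomial.C (j : ℚ))) *
        (X + Polynomial.C ((i : ℚ) / 2)) := by
  rw [key (i+1) (by omega)]
  apply Polynomial.ext
  intro m
  rw [coeff_sum']
  have hL : (if m ∈ Finset.Icc 1 (i+2) then (S m (i+2) - S m (i+1)/2)/(m.factorial : ℚ) else 0)
      = (S m (i+2) - S m (i+1)/2)/(m.factorial : ℚ) := by
    split_ifs with h
    · rfl
    · rw [Finset.mem_Icc] at h
      push_neg at h
      rcases Nat.lt_or_ge m 1 with hm | hm
      · interval_cases m
        rw [S_zero_pos (by omega), S_zero_pos (by omega)]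
        norm_num
      · rw [S_of_lt (by omega : i + 2 < m), S_of_lt (by omega : i + 1 < m)]
        norm_num
  rw [hL, mul_add, Polynomial.coeff_add, Polynomial.coeff_mul_C, Polynomial.coeff_C_mul,
    coeff_main (i+1) m (by omega)]
  cases m with
  | zero =>
    rw [Polynomial.mul_coeff_zero, Polynomial.coeff_X_zero, mul_zero,
      S_zero_pos (by omega : 1 ≤ i + 2), S_zero_pos (by omega : 1 ≤ i + 1)]
    norm_num
  | succ j =>
    rw [Polynomial.coeff_mul_X, Polynomial.coeff_C_mul, coeff_main (i+1) j (by omega)]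
    have hrec := recur j (i+1)
    have hf1 : ((i+2).factorial : ℚ) = ((i : ℚ) + 2) * ((i+1).factorial : ℚ) := by
      rw [show i + 2 = (i+1)+1 from rfl, Nat.factorial_succ]; push_cast; ring
    have hf2 : ((j+1).factorial : ℚ) = ((j : ℚ) + 1) * (j.factorial : ℚ) := by
      rw [Nat.factorial_succ]; push_cast; ring
    have hj0 : (j.factorial : ℚ) ≠ 0 := Nat.cast_ne_zero.mpr j.factorial_ne_zero
    have hi0 : ((i+1).factorial : ℚ) ≠ 0 := Nat.cast_ne_zero.mpr (i+1).factorial_ne_zero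
    have hj1 : ((j : ℚ) + 1) ≠ 0 := by positivity
    push_cast at hrec ⊢
    have hS : S (j+1) (i+2) = (((i : ℚ) + 1) * S (j+1) (i+1) + ((j : ℚ) + 1) * S j (i+1)) / ((i : ℚ) + 2) := by
      rw [eq_div_iff (by positivity)]
      have h12 : i + 1 + 1 = i + 2 := rfl
      rw [h12] at hrec
      linarith [hrec]
    rw [hS, hf1, hf2]
    have hi2 : ((i : ℚ) + 2) ≠ 0 := by positivity
    field_simp
    ring
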